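/- arXiv:2604.19248 — 7 statements merged into one kernel-verified Lean document; each statement's English description precedes it below -/
import Mathlib

section
/- Let the target path p : ℝ → ℝ² have unit tangent e'_1(s) = (cos θ_r(s), sin θ_r(s)) with θ_r differentiable, curvature κ_r = θ_r', and unit normal e'_2(s) = (−sin θ_r(s), cos θ_r(s)), so that p'(s) = e'_1(s). Let q : [t₀,t₁] → ℝ² be differentiable with q̇(t) = v(t)(cos θ_o(t), sin θ_o(t)) for functions v, θ_o, and let s_r : [t₀,t₁] → ℝ be differentiable. Define q'(t) = q(t) − p(s_r(t)) and z(t) = q'(t) · e'_2(s_r(t)). Then the tangential component η(t) = q'(t) · e'_1(s_r(t)) is differentiable and satisfies η̇(t) = v(t) cos(θ_o(t) − θ_r(s_r(t))) − ṡ_r(t)·(1 − κ_r(s_r(t)) z(t)) for all t ∈ [t₀,t₁]. -/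
/-- Euclidean dot product on `ℝ × ℝ`. -/
def dot (a b : ℝ × ℝ) : ℝ := a.1 * b.1 + a.2 * b.2

/-- time derivative of the tangential component
`η(t) = q'(t) ⬝ e'_1(s_r(t))` of the vector `q'(t) = q(t) − p(s_r(t))` from the
reference point to the plant:
`η̇ = v cos(θ_o − θ_r(s_r)) − ṡ_r (1 − κ_r(s_r) z)`, with
`z = q' ⬝ e'_2(s_r)`. -/
theorem tangential_component_derivative
    (θr : ℝ → ℝ) (hθr : Differentiable ℝ θr)
    (κr : ℝ → ℝ) (hκr : ∀ s, κr s = deriv θr s)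
    (e1 e2 : ℝ → ℝ × ℝ)
    (he1 : ∀ s, e1 s = (Real.cos (θr s), Real.sin (θr s)))
    (he2 : ∀ s, e2 s = (-Real.sin (θr s), Real.cos (θr s)))
    (p : ℝ → ℝ × ℝ) (hp : ∀ s, HasDerivAt p (e1 s) s)
    (t0 t1 : ℝ)
    (q : ℝ → ℝ × ℝ) (v θo : ℝ → ℝ)
    (hq : ∀ t ∈ Set.Icc t0 t1,
      HasDerivWithinAt q (v t • (Real.cos (θo t), Real.sin (θo t))) (Set.Icc t0 t1) t)
    (sr sr' : ℝ → ℝ)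
    (hsr : ∀ t ∈ Set.Icc t0 t1, HasDerivWithinAt sr (sr' t) (Set.Icc t0 t1) t)
    (z : ℝ → ℝ) (hz : ∀ t, z t = dot (q t - p (sr t)) (e2 (sr t))) :
    ∀ t ∈ Set.Icc t0 t1,
      HasDerivWithinAt (fun t => dot (q t - p (sr t)) (e1 (sr t)))
        (v t * Real.cos (θo t - θr (sr t)) - sr' t * (1 - κr (sr t) * z t))
        (Set.Icc t0 t1) t := by
  intro t ht
  set S := Set.Icc t0 t1
  have hst := hsr t ht
  have hθ : HasDerivWithinAt (fun t => θr (sr t)) (deriv θr (sr t) * sr' t) S t :=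
    (hθr (sr t)).hasDerivAt.comp_hasDerivWithinAt t hst
  have hcos : HasDerivWithinAt (fun t => Real.cos (θr (sr t)))
      (-Real.sin (θr (sr t)) * (deriv θr (sr t) * sr' t)) S t :=
    (Real.hasDerivAt_cos _).comp_hasDerivWithinAt t hθ
  have hsin : HasDerivWithinAt (fun t => Real.sin (θr (sr t)))
      (Real.cos (θr (sr t)) * (deriv θr (sr t) * sr' t)) S t :=
    (Real.hasDerivAt_sin _).comp_hasDerivWithinAt t hθ
  have hq1 : HasDerivWithinAt (fun t => (q t).1) (v t * Real.cos (θo t)) S t := by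
    have h := hasFDerivAt_fst.comp_hasDerivWithinAt t (hq t ht); simp at h; exact h
  have hq2 : HasDerivWithinAt (fun t => (q t).2) (v t * Real.sin (θo t)) S t := by
    have h := hasFDerivAt_snd.comp_hasDerivWithinAt t (hq t ht); simp at h; exact h
  have hps : HasDerivWithinAt (fun t => p (sr t)) (sr' t • e1 (sr t)) S t :=
    ((hp (sr t)).hasDerivWithinAt (s := Set.univ)).scomp t hst (Set.mapsTo_univ _ _)
  have hp1 : HasDerivWithinAt (fun t => (p (sr t)).1) (sr' t * Real.cos (θr (sr t))) S t := by
    have h := hasFDerivAt_fst.comp_hasDerivWithinAt t hps; simp [he1] at h; exact h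
  have hp2 : HasDerivWithinAt (fun t => (p (sr t)).2) (sr' t * Real.sin (θr (sr t))) S t := by
    have h := hasFDerivAt_snd.comp_hasDerivWithinAt t hps; simp [he1] at h; exact h
  have key := ((hq1.sub hp1).mul hcos).add ((hq2.sub hp2).mul hsin)
  have heq : (fun t => dot (q t - p (sr t)) (e1 (sr t))) =
      fun t => ((q t).1 - (p (sr t)).1) * Real.cos (θr (sr t)) +
        ((q t).2 - (p (sr t)).2) * Real.sin (θr (sr t)) := by
    funext u; simp [dot, he1]
  rw [heq]
  convert key using 1
  · rfl
  · rfl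
  · rfl
  rw [hκr, hz, Real.cos_sub]
  simp only [dot, he2, Prod.fst_sub, Prod.snd_sub, Pi.sub_apply]
  linear_combination (sr' t) * Real.sin_sq_add_cos_sq (θr (sr t))
end

section
/- Under the same setting (target path p with tangent angle θ_r, curvature κ_r = θ_r', frame e'_1, e'_2; plant position q with q̇ = v(cos θ_o, sin θ_o); differentiable s_r; q'(t) = q(t) − p(s_r(t))), the normal component μ(t) = q'(t) · e'_2(s_r(t)) is differentiable and satisfies μ̇(t) = v(t) sin(θ_o(t) − θ_r(s_r(t))) − κ_r(s_r(t)) ṡ_r(t) · (q'(t) · e'_1(s_r(t))) for all t ∈ [t₀,t₁]. -/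
/-- time derivative of the normal component
`μ(t) = q'(t) ⬝ e'_2(s_r(t))` of the vector `q'(t) = q(t) − p(s_r(t))`:
`μ̇ = v sin(θ_o − θ_r(s_r)) − κ_r(s_r) ṡ_r (q' ⬝ e'_1(s_r))`. -/
theorem normal_component_derivative
    (θr : ℝ → ℝ) (hθr : Differentiable ℝ θr)
    (κr : ℝ → ℝ) (hκr : ∀ s, κr s = deriv θr s)
    (e1 e2 : ℝ → ℝ × ℝ)
    (he1 : ∀ s, e1 s = (Real.cos (θr s), Real.sin (θr s)))
    (he2 : ∀ s, e2 s = (-Real.sin (θr s), Real.cos (θr s)))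
    (p : ℝ → ℝ × ℝ) (hp : ∀ s, HasDerivAt p (e1 s) s)
    (t0 t1 : ℝ)
    (q : ℝ → ℝ × ℝ) (v θo : ℝ → ℝ)
    (hq : ∀ t ∈ Set.Icc t0 t1,
      HasDerivWithinAt q (v t • (Real.cos (θo t), Real.sin (θo t))) (Set.Icc t0 t1) t)
    (sr sr' : ℝ → ℝ)
    (hsr : ∀ t ∈ Set.Icc t0 t1, HasDerivWithinAt sr (sr' t) (Set.Icc t0 t1) t) :
    ∀ t ∈ Set.Icc t0 t1,
      HasDerivWithinAt (fun t => dot (q t - p (sr t)) (e2 (sr t)))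
        (v t * Real.sin (θo t - θr (sr t)) -
          κr (sr t) * sr' t * dot (q t - p (sr t)) (e1 (sr t)))
        (Set.Icc t0 t1) t := by

  intro t ht
  have hsr' := hsr t ht
  have hq' := hq t ht
  have hθs : HasDerivWithinAt (fun t => θr (sr t)) (deriv θr (sr t) * sr' t)
      (Set.Icc t0 t1) t :=
    (hθr (sr t)).hasDerivAt.comp_hasDerivWithinAt t hsr'
  have hsin : HasDerivWithinAt (fun t => Real.sin (θr (sr t)))
      (Real.cos (θr (sr t)) * (deriv θr (sr t) * sr' t)) (Set.Icc t0 t1) t :=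
    (Real.hasDerivAt_sin _).comp_hasDerivWithinAt t hθs
  have hcos : HasDerivWithinAt (fun t => Real.cos (θr (sr t)))
      (-Real.sin (θr (sr t)) * (deriv θr (sr t) * sr' t)) (Set.Icc t0 t1) t :=
    (Real.hasDerivAt_cos _).comp_hasDerivWithinAt t hθs
  have hps : HasDerivWithinAt (fun t => p (sr t)) (sr' t • e1 (sr t)) (Set.Icc t0 t1) t :=
    (hp (sr t)).scomp_hasDerivWithinAt t hsr'
  have hp1 : HasDerivWithinAt (fun t => (p (sr t)).1) (sr' t * Real.cos (θr (sr t)))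
      (Set.Icc t0 t1) t := by
    have := hps.fst
    exact HasDerivWithinAt.congr_deriv this (by simp [he1])
  have hp2 : HasDerivWithinAt (fun t => (p (sr t)).2) (sr' t * Real.sin (θr (sr t)))
      (Set.Icc t0 t1) t := by
    have := hps.snd
    exact HasDerivWithinAt.congr_deriv this (by simp [he1])
  have hq1 : HasDerivWithinAt (fun t => (q t).1) (v t * Real.cos (θo t))
      (Set.Icc t0 t1) t := by
    have := hq'.fst
    exact HasDerivWithinAt.congr_deriv this (by simp)
  have hq2 : HasDerivWithinAt (fun t => (q t).2) (v t * Real.sin (θo t))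
      (Set.Icc t0 t1) t := by
    have := hq'.snd
    exact HasDerivWithinAt.congr_deriv this (by simp)
  have hF1 := hq1.sub hp1
  have hF2 := hq2.sub hp2
  have hμ := (hF1.mul hsin.neg).add (hF2.mul hcos)
  simp only [dot, he1, he2, Prod.fst_sub, Prod.snd_sub]
  refine hμ.congr_deriv ?_
  rw [hκr, Real.sin_sub]
  simp only [Pi.neg_apply, Pi.sub_apply]
  ring
end

section
/- (Sufficiency direction of Theorem 1.) Let the target path p : ℝ → ℝ² have unit tangent e'_1(s) = (cos θ_r(s), sin θ_r(s)) with θ_r continuously differentiable and κ_r = θ_r' locally Lipschitz, and unit normal e'_2(s) = (−sin θ_r(s), cos θ_r(s)). Let q : [t₀,t₁] → ℝ² satisfy q̇ = v(cos θ_o, sin θ_o) with θ̇_o = κ v for continuous v, κ and differentiable θ_o. Suppose (θ, s_r, z) : [t₀,t₁] → ℝ³ is a differentiable solution of ṡ_r = v cos θ / (1 − κ_r(s_r) z), ż = v sin θ, θ̇ = κ v − κ_r(s_r)·v cos θ / (1 − κ_r(s_r) z), with 1 − κ_r(s_r(t)) z(t) > 0 for all t, and the initial conditions θ(t₀) = θ_o(t₀)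 − θ_r(s_r(t₀)), (q(t₀) − p(s_r(t₀))) · e'_1(s_r(t₀)) = 0, and (q(t₀) − p(s_r(t₀))) · e'_2(s_r(t₀)) = z(t₀). Then for all t ∈ [t₀,t₁]: (q(t) − p(s_r(t))) · e'_1(s_r(t)) = 0, (q(t) − p(s_r(t))) · e'_2(s_r(t)) = z(t), and θ(t) = θ_o(t) − θ_r(s_r(t)). -/
private lemma const_on_Icc {f : ℝ → ℝ} {t0 t1 : ℝ}
    (h : ∀ t ∈ Set.Icc t0 t1, HasDerivWithinAt f 0 (Set.Icc t0 t1) t) :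
    ∀ t ∈ Set.Icc t0 t1, f t = f t0 :=
  constant_of_has_deriv_right_zero
    (fun x hx => (h x hx).continuousWithinAt)
    (fun x hx => (h x ⟨hx.1, hx.2.le⟩).mono_of_mem_nhdsWithin (Icc_mem_nhdsGE_of_mem hx))

/-- Sufficiency direction of Theorem 1: if `(θ, s_r, z)` is a
differentiable solution of the error state equations on `[t₀,t₁]` with
`1 − κ_r(s_r) z > 0`, whose initial data agree with the geometric
quantities at `t₀`, then for all `t ∈ [t₀,t₁]`:
`(q − p(s_r)) ⬝ e'_1(s_r) = 0`, `(q − p(s_r)) ⬝ e'_2(s_r) = z`, and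
`θ = θ_o − θ_r(s_r)`. -/
theorem error_dynamics_sufficiency
    (θr : ℝ → ℝ) (hθr : ContDiff ℝ 1 θr)
    (κr : ℝ → ℝ) (hκr : ∀ s, κr s = deriv θr s) (hκrLip : LocallyLipschitz κr)
    (e1 e2 : ℝ → ℝ × ℝ)
    (he1 : ∀ s, e1 s = (Real.cos (θr s), Real.sin (θr s)))
    (he2 : ∀ s, e2 s = (-Real.sin (θr s), Real.cos (θr s)))
    (p : ℝ → ℝ × ℝ) (hp : ∀ s, HasDerivAt p (e1 s) s)
    (t0 t1 : ℝ) (ht01 : t0 ≤ t1)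
    (q : ℝ → ℝ × ℝ) (v κ θo : ℝ → ℝ)
    (hv : ContinuousOn v (Set.Icc t0 t1)) (hκcont : ContinuousOn κ (Set.Icc t0 t1))
    (hθo : ∀ t ∈ Set.Icc t0 t1, HasDerivWithinAt θo (κ t * v t) (Set.Icc t0 t1) t)
    (hq : ∀ t ∈ Set.Icc t0 t1,
      HasDerivWithinAt q (v t • (Real.cos (θo t), Real.sin (θo t))) (Set.Icc t0 t1) t)
    (θ sr z : ℝ → ℝ)
    (hsr : ∀ t ∈ Set.Icc t0 t1,
      HasDerivWithinAt sr (v t * Real.cos (θ t) / (1 - κr (sr t) * z t))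
        (Set.Icc t0 t1) t)
    (hzder : ∀ t ∈ Set.Icc t0 t1,
      HasDerivWithinAt z (v t * Real.sin (θ t)) (Set.Icc t0 t1) t)
    (hθder : ∀ t ∈ Set.Icc t0 t1,
      HasDerivWithinAt θ
        (κ t * v t - κr (sr t) * v t * Real.cos (θ t) / (1 - κr (sr t) * z t))
        (Set.Icc t0 t1) t)
    (hD : ∀ t ∈ Set.Icc t0 t1, 1 - κr (sr t) * z t > 0)
    (hθ0 : θ t0 = θo t0 - θr (sr t0))
    (horth0 : dot (q t0 - p (sr t0)) (e1 (sr t0)) = 0)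
    (hz0 : dot (q t0 - p (sr t0)) (e2 (sr t0)) = z t0) :
    ∀ t ∈ Set.Icc t0 t1,
      dot (q t - p (sr t)) (e1 (sr t)) = 0 ∧
      dot (q t - p (sr t)) (e2 (sr t)) = z t ∧
      θ t = θo t - θr (sr t) := by
  have hθrd : ∀ s, HasDerivAt θr (κr s) s := fun s => by
    rw [hκr]; exact ((hθr.differentiable one_ne_zero) s).hasDerivAt
  set S := Set.Icc t0 t1 with hSdef
  have ht0S : t0 ∈ S := ⟨le_rfl, ht01⟩
  -- derivative of θr ∘ sr
  have hθrsr : ∀ t ∈ S, HasDerivWithinAt (fun u => θr (sr u))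
      (κr (sr t) * (v t * Real.cos (θ t) / (1 - κr (sr t) * z t))) S t := fun t ht =>
    (hθrd (sr t)).comp_hasDerivWithinAt t (hsr t ht)
  -- Step 1: θ = θo - θr ∘ sr on S
  have hθeq : ∀ t ∈ S, θ t = θo t - θr (sr t) := by
    have hφ : ∀ t ∈ S, θ t - (θo t - θr (sr t)) = θ t0 - (θo t0 - θr (sr t0)) := by
      apply const_on_Icc
      intro t ht
      have h := (hθder t ht).sub ((hθo t ht).sub (hθrsr t ht))
      refine h.congr_deriv ?_
      ring
    intro t ht
    have h := hφ t ht
    rw [hθ0] at h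
    linarith
  -- component derivatives
  have hq1 : ∀ t ∈ S, HasDerivWithinAt (fun u => (q u).1) (v t * Real.cos (θo t)) S t := by
    intro t ht
    have := (ContinuousLinearMap.fst ℝ ℝ ℝ).hasFDerivAt.comp_hasDerivWithinAt t (hq t ht)
    exact this.congr_deriv (by simp)
  have hq2 : ∀ t ∈ S, HasDerivWithinAt (fun u => (q u).2) (v t * Real.sin (θo t)) S t := by
    intro t ht
    have := (ContinuousLinearMap.snd ℝ ℝ ℝ).hasFDerivAt.comp_hasDerivWithinAt t (hq t ht)
    exact this.congr_deriv (by simp)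
  have hp1 : ∀ s, HasDerivAt (fun u => (p u).1) (Real.cos (θr s)) s := by
    intro s
    have := (ContinuousLinearMap.fst ℝ ℝ ℝ).hasFDerivAt.comp_hasDerivAt s (hp s)
    exact this.congr_deriv (by simp [he1])
  have hp2 : ∀ s, HasDerivAt (fun u => (p u).2) (Real.sin (θr s)) s := by
    intro s
    have := (ContinuousLinearMap.snd ℝ ℝ ℝ).hasFDerivAt.comp_hasDerivAt s (hp s)
    exact this.congr_deriv (by simp [he1])
  -- the error coordinates as explicit functions
  set X1 : ℝ → ℝ := fun u =>
    ((q u).1 - (p (sr u)).1) * Real.cos (θr (sr u)) +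
      ((q u).2 - (p (sr u)).2) * Real.sin (θr (sr u)) with hX1def
  set X2 : ℝ → ℝ := fun u =>
    ((q u).1 - (p (sr u)).1) * (-Real.sin (θr (sr u))) +
      ((q u).2 - (p (sr u)).2) * Real.cos (θr (sr u)) with hX2def
  have hdotX1 : ∀ u, dot (q u - p (sr u)) (e1 (sr u)) = X1 u := by
    intro u; simp [dot, he1, hX1def]
  have hdotX2 : ∀ u, dot (q u - p (sr u)) (e2 (sr u)) = X2 u := by
    intro u; simp [dot, he2, hX2def]
  -- derivatives of X1, X2
  have hA : ∀ t ∈ S, HasDerivWithinAt (fun u => (q u).1 - (p (sr u)).1)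
      (v t * Real.cos (θo t) -
        Real.cos (θr (sr t)) * (v t * Real.cos (θ t) / (1 - κr (sr t) * z t))) S t := by
    intro t ht
    exact (hq1 t ht).sub ((hp1 (sr t)).comp_hasDerivWithinAt t (hsr t ht))
  have hB : ∀ t ∈ S, HasDerivWithinAt (fun u => (q u).2 - (p (sr u)).2)
      (v t * Real.sin (θo t) -
        Real.sin (θr (sr t)) * (v t * Real.cos (θ t) / (1 - κr (sr t) * z t))) S t := by
    intro t ht
    exact (hq2 t ht).sub ((hp2 (sr t)).comp_hasDerivWithinAt t (hsr t ht))
  have hc : ∀ t ∈ S, HasDerivWithinAt (fun u => Real.cos (θr (sr u)))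
      (-Real.sin (θr (sr t)) *
        (κr (sr t) * (v t * Real.cos (θ t) / (1 - κr (sr t) * z t)))) S t := by
    intro t ht
    exact (Real.hasDerivAt_cos _).comp_hasDerivWithinAt t (hθrsr t ht)
  have hs : ∀ t ∈ S, HasDerivWithinAt (fun u => Real.sin (θr (sr u)))
      (Real.cos (θr (sr t)) *
        (κr (sr t) * (v t * Real.cos (θ t) / (1 - κr (sr t) * z t)))) S t := by
    intro t ht
    exact (Real.hasDerivAt_sin _).comp_hasDerivWithinAt t (hθrsr t ht)
  -- Lyapunov-type function
  set g : ℝ → ℝ := fun u => X1 u ^ 2 + (X2 u - z u) ^ 2 with hgdef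
  have hgconst : ∀ t ∈ S, g t = g t0 := by
    apply const_on_Icc
    intro t ht
    have hX1d := ((hA t ht).mul (hc t ht)).add ((hB t ht).mul (hs t ht))
    have hX2d := ((hA t ht).mul ((hs t ht).neg)).add ((hB t ht).mul (hc t ht))
    have hgd := (hX1d.pow 2).add ((hX2d.sub (hzder t ht)).pow 2)
    have hDne : (1 - κr (sr t) * z t) ≠ 0 := ne_of_gt (hD t ht)
    have hdD : v t * Real.cos (θ t) / (1 - κr (sr t) * z t) * (1 - κr (sr t) * z t)
        = v t * Real.cos (θ t) := div_mul_cancel₀ _ hDne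
    have hcost : Real.cos (θ t) = Real.cos (θo t) * Real.cos (θr (sr t)) +
        Real.sin (θo t) * Real.sin (θr (sr t)) := by rw [hθeq t ht, Real.cos_sub]
    have hsint : Real.sin (θ t) = Real.sin (θo t) * Real.cos (θr (sr t)) -
        Real.cos (θo t) * Real.sin (θr (sr t)) := by rw [hθeq t ht, Real.sin_sub]
    rw [hcost] at hdD
    rw [hcost, hsint] at hgd
    refine hgd.congr_deriv ?_
    symm
    have hpyth := Real.sin_sq_add_cos_sq (θr (sr t))
    simp only [Pi.add_apply, Pi.sub_apply, Pi.neg_apply, Pi.mul_apply]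
    linear_combination (norm := skip)
      (2 * X1 t * (v t * (Real.cos (θo t) * Real.cos (θr (sr t)) +
        Real.sin (θo t) * Real.sin (θr (sr t))) / (1 - κr (sr t) * z t))) * hpyth +
      (2 * X1 t) * hdD
    simp only [hX1def]
    ring
  -- initial value of g
  have hg0 : g t0 = 0 := by
    have h1 : X1 t0 = 0 := by rw [← hdotX1]; exact horth0
    have h2 : X2 t0 = z t0 := by rw [← hdotX2]; exact hz0
    simp [hgdef, h1, h2]
  intro t ht
  have hgt : X1 t ^ 2 + (X2 t - z t) ^ 2 = 0 := by
    have := hgconst t ht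
    rw [hg0] at this
    exact this
  have hX1t : X1 t = 0 := by
    have h2 : X1 t ^ 2 = 0 := by nlinarith [sq_nonneg (X2 t - z t), sq_nonneg (X1 t)]
    exact pow_eq_zero_iff two_ne_zero |>.mp h2
  have hX2t : X2 t - z t = 0 := by
    have h2 : (X2 t - z t) ^ 2 = 0 := by nlinarith [sq_nonneg (X2 t - z t), sq_nonneg (X1 t)]
    have := pow_eq_zero_iff two_ne_zero |>.mp h2
    exact this
  exact ⟨by rw [hdotX1]; exact hX1t, by rw [hdotX2]; linarith, hθeq t ht⟩
end

section
/- (Theorem 1, equivalence.) Let the target path p : ℝ → ℝ² have unit tangent e'_1(s) = (cos θ_r(s), sin θ_r(s)) with θ_r continuously differentiable and κ_r = θ_r' locally Lipschitz, and unit normal e'_2(s) = (−sin θ_r(s), cos θ_r(s)). Let q : [t₀,t₁] → ℝ² satisfy q̇ = v(cos θ_o, sin θ_o) with θ̇_o = κ v for continuous v, κ and differentiable θ_o, and fix s_{r0} ∈ ℝ. Then the following are equivalent: (I) there exists a differentiable s_r : [t₀,t₁] → ℝ with s_r(t₀) = s_{r0} such that for all t, (q(t) − p(s_r(t))) · e'_1(s_r(t))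 = 0 and 1 − κ_r(s_r(t)) · ((q(t) − p(s_r(t))) · e'_2(s_r(t))) > 0; (II) (q(t₀) − p(s_{r0})) · e'_1(s_{r0}) = 0, 1 − κ_r(s_{r0}) · ((q(t₀) − p(s_{r0})) · e'_2(s_{r0})) > 0, and the system ṡ_r = v cos θ / (1 − κ_r(s_r) z), ż = v sin θ, θ̇ = κ v − κ_r(s_r) v cos θ / (1 − κ_r(s_r) z), with initial conditions s_r(t₀) = s_{r0}, z(t₀) = (q(t₀) − p(s_{r0})) · e'_2(s_{r0}), θ(t₀) = θ_o(t₀) − θ_r(s_{r0}), admits a differentiable solution (θ, s_r, z) on [t₀,t₁] along which 1 − κ_r(s_r(t)) z(t) > 0 for all t. -/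
open Set

lemma hasDerivWithinAt_singleton' {E : Type*} [NormedAddCommGroup E] [NormedSpace ℝ E]
    (f : ℝ → E) (x : ℝ) (c : E) : HasDerivWithinAt f c {x} x := by
  rw [hasDerivWithinAt_iff_isLittleO, nhdsWithin_singleton]
  simp

lemma dot_hasDerivWithinAt {a b : ℝ → ℝ × ℝ} {a' b' : ℝ × ℝ} {s : Set ℝ} {x : ℝ}
    (ha : HasDerivWithinAt a a' s x) (hb : HasDerivWithinAt b b' s x) :
    HasDerivWithinAt (fun t => dot (a t) (b t)) (dot a' (b x) + dot (a x) b') s x := by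
  have h1 : HasDerivWithinAt (fun t => (a t).1) a'.1 s x :=
    (ContinuousLinearMap.fst ℝ ℝ ℝ).hasFDerivAt.comp_hasDerivWithinAt x ha
  have h2 : HasDerivWithinAt (fun t => (a t).2) a'.2 s x :=
    (ContinuousLinearMap.snd ℝ ℝ ℝ).hasFDerivAt.comp_hasDerivWithinAt x ha
  have h3 : HasDerivWithinAt (fun t => (b t).1) b'.1 s x :=
    (ContinuousLinearMap.fst ℝ ℝ ℝ).hasFDerivAt.comp_hasDerivWithinAt x hb
  have h4 : HasDerivWithinAt (fun t => (b t).2) b'.2 s x :=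
    (ContinuousLinearMap.snd ℝ ℝ ℝ).hasFDerivAt.comp_hasDerivWithinAt x hb
  have := (h1.mul h3).add (h2.mul h4)
  simp only [dot]; exact this.congr_deriv (by ring)

section Key

variable {θr κr : ℝ → ℝ} {e1 e2 : ℝ → ℝ × ℝ} {p : ℝ → ℝ × ℝ}

lemma θr_hasDerivAt (hθr : ContDiff ℝ 1 θr) (hκr : ∀ s, κr s = deriv θr s) (s : ℝ) :
    HasDerivAt θr (κr s) s := by
  rw [hκr]
  exact (hθr.differentiable one_ne_zero s).hasDerivAt

lemma e1_hasDerivAt (hθr : ContDiff ℝ 1 θr) (hκr : ∀ s, κr s = deriv θr s)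
    (he1 : ∀ s, e1 s = (Real.cos (θr s), Real.sin (θr s)))
    (he2 : ∀ s, e2 s = (-Real.sin (θr s), Real.cos (θr s))) (s : ℝ) :
    HasDerivAt e1 (κr s • e2 s) s := by
  have h := θr_hasDerivAt hθr hκr s
  have hc : HasDerivAt (fun u => Real.cos (θr u)) (-Real.sin (θr s) * κr s) s :=
    (Real.hasDerivAt_cos (θr s)).comp s h
  have hs : HasDerivAt (fun u => Real.sin (θr u)) (Real.cos (θr s) * κr s) s :=
    (Real.hasDerivAt_sin (θr s)).comp s h
  have := hc.prodMk hs
  have he1' : e1 = fun u => (Real.cos (θr u), Real.sin (θr u)) := funext he1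
  rw [he1', he2]
  convert this using 1
  simp [Prod.smul_def]; constructor <;> ring

lemma e2_hasDerivAt (hθr : ContDiff ℝ 1 θr) (hκr : ∀ s, κr s = deriv θr s)
    (he1 : ∀ s, e1 s = (Real.cos (θr s), Real.sin (θr s)))
    (he2 : ∀ s, e2 s = (-Real.sin (θr s), Real.cos (θr s))) (s : ℝ) :
    HasDerivAt e2 ((-κr s) • e1 s) s := by
  have h := θr_hasDerivAt hθr hκr s
  have hc : HasDerivAt (fun u => -Real.sin (θr u)) (-(Real.cos (θr s) * κr s)) s :=
    ((Real.hasDerivAt_sin (θr s)).comp s h).neg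
  have hs : HasDerivAt (fun u => Real.cos (θr u)) (-Real.sin (θr s) * κr s) s :=
    (Real.hasDerivAt_cos (θr s)).comp s h
  have := hc.prodMk hs
  have he2' : e2 = fun u => (-Real.sin (θr u), Real.cos (θr u)) := funext he2
  rw [he2', he1]
  convert this using 1
  simp [Prod.smul_def]; constructor <;> ring

lemma keyE1 (hθr : ContDiff ℝ 1 θr) (hκr : ∀ s, κr s = deriv θr s)
    (he1 : ∀ s, e1 s = (Real.cos (θr s), Real.sin (θr s)))
    (he2 : ∀ s, e2 s = (-Real.sin (θr s), Real.cos (θr s)))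
    (hp : ∀ s, HasDerivAt p (e1 s) s)
    {s : Set ℝ} {x : ℝ} {q : ℝ → ℝ × ℝ} {q' : ℝ × ℝ} (hq : HasDerivWithinAt q q' s x)
    {sr : ℝ → ℝ} {sr' : ℝ} (hsr : HasDerivWithinAt sr sr' s x) :
    HasDerivWithinAt (fun u => dot (q u - p (sr u)) (e1 (sr u)))
      (dot q' (e1 (sr x)) - sr' * (1 - κr (sr x) * dot (q x - p (sr x)) (e2 (sr x)))) s x := by
  have hA : HasDerivWithinAt (fun u => q u - p (sr u)) (q' - sr' • e1 (sr x)) s x :=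
    hq.sub ((hp (sr x)).scomp_hasDerivWithinAt x hsr)
  have hE : HasDerivWithinAt (fun u => e1 (sr u)) (sr' • (κr (sr x) • e2 (sr x))) s x :=
    (e1_hasDerivAt hθr hκr he1 he2 (sr x)).scomp_hasDerivWithinAt x hsr
  have := dot_hasDerivWithinAt hA hE
  convert this using 1
  simp only [dot, he1, he2, Prod.smul_def, Prod.fst_sub, Prod.snd_sub, smul_eq_mul,
    Prod.mk_sub_mk]
  linear_combination sr' * Real.sin_sq_add_cos_sq (θr (sr x))

lemma keyE2 (hθr : ContDiff ℝ 1 θr) (hκr : ∀ s, κr s = deriv θr s)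
    (he1 : ∀ s, e1 s = (Real.cos (θr s), Real.sin (θr s)))
    (he2 : ∀ s, e2 s = (-Real.sin (θr s), Real.cos (θr s)))
    (hp : ∀ s, HasDerivAt p (e1 s) s)
    {s : Set ℝ} {x : ℝ} {q : ℝ → ℝ × ℝ} {q' : ℝ × ℝ} (hq : HasDerivWithinAt q q' s x)
    {sr : ℝ → ℝ} {sr' : ℝ} (hsr : HasDerivWithinAt sr sr' s x) :
    HasDerivWithinAt (fun u => dot (q u - p (sr u)) (e2 (sr u)))
      (dot q' (e2 (sr x)) - sr' * κr (sr x) * dot (q x - p (sr x)) (e1 (sr x))) s x := by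
  have hA : HasDerivWithinAt (fun u => q u - p (sr u)) (q' - sr' • e1 (sr x)) s x :=
    hq.sub ((hp (sr x)).scomp_hasDerivWithinAt x hsr)
  have hE : HasDerivWithinAt (fun u => e2 (sr u)) (sr' • ((-κr (sr x)) • e1 (sr x))) s x :=
    (e2_hasDerivAt hθr hκr he1 he2 (sr x)).scomp_hasDerivWithinAt x hsr
  have := dot_hasDerivWithinAt hA hE
  convert this using 1
  simp only [dot, he1, he2, Prod.smul_def, Prod.fst_sub, Prod.snd_sub, smul_eq_mul,
    Prod.mk_sub_mk]
  ring

end Key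

/-- Theorem 1, equivalence: the existence of a differentiable
reference-point parameter `s_r` satisfying the orthogonality condition (A1)
and the regularity condition (A2) on `[t₀,t₁]` with `s_r(t₀) = s_{r0}` is
equivalent to: the initial conditions (B1), (B2) hold and the error state
equation admits a differentiable solution `(θ, s_r, z)` on `[t₀,t₁]` along
which `1 − κ_r(s_r) z > 0`. -/
theorem reference_point_existence_iff
    (θr : ℝ → ℝ) (hθr : ContDiff ℝ 1 θr)
    (κr : ℝ → ℝ) (hκr : ∀ s, κr s = deriv θr s) (hκrLip : LocallyLipschitz κr)
    (e1 e2 : ℝ → ℝ × ℝ)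
    (he1 : ∀ s, e1 s = (Real.cos (θr s), Real.sin (θr s)))
    (he2 : ∀ s, e2 s = (-Real.sin (θr s), Real.cos (θr s)))
    (p : ℝ → ℝ × ℝ) (hp : ∀ s, HasDerivAt p (e1 s) s)
    (t0 t1 : ℝ) (ht01 : t0 ≤ t1)
    (q : ℝ → ℝ × ℝ) (v κ θo : ℝ → ℝ)
    (hv : ContinuousOn v (Set.Icc t0 t1)) (hκcont : ContinuousOn κ (Set.Icc t0 t1))
    (hθo : ∀ t ∈ Set.Icc t0 t1, HasDerivWithinAt θo (κ t * v t) (Set.Icc t0 t1) t)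
    (hq : ∀ t ∈ Set.Icc t0 t1,
      HasDerivWithinAt q (v t • (Real.cos (θo t), Real.sin (θo t))) (Set.Icc t0 t1) t)
    (sr0 : ℝ) :
    (∃ sr sr' : ℝ → ℝ,
      (∀ t ∈ Set.Icc t0 t1, HasDerivWithinAt sr (sr' t) (Set.Icc t0 t1) t) ∧
      sr t0 = sr0 ∧
      (∀ t ∈ Set.Icc t0 t1,
        dot (q t - p (sr t)) (e1 (sr t)) = 0 ∧
        1 - κr (sr t) * dot (q t - p (sr t)) (e2 (sr t)) > 0))
    ↔
    (dot (q t0 - p sr0) (e1 sr0) = 0 ∧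
     1 - κr sr0 * dot (q t0 - p sr0) (e2 sr0) > 0 ∧
     ∃ θ sr z : ℝ → ℝ,
       sr t0 = sr0 ∧
       z t0 = dot (q t0 - p sr0) (e2 sr0) ∧
       θ t0 = θo t0 - θr sr0 ∧
       (∀ t ∈ Set.Icc t0 t1,
         HasDerivWithinAt sr (v t * Real.cos (θ t) / (1 - κr (sr t) * z t))
           (Set.Icc t0 t1) t ∧
         HasDerivWithinAt z (v t * Real.sin (θ t)) (Set.Icc t0 t1) t ∧
         HasDerivWithinAt θ
           (κ t * v t - κr (sr t) * v t * Real.cos (θ t) / (1 - κr (sr t) * z t))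
           (Set.Icc t0 t1) t ∧
         1 - κr (sr t) * z t > 0)) := by
  have ht0S : t0 ∈ Set.Icc t0 t1 := ⟨le_refl _, ht01⟩
  constructor
  · rintro ⟨sr, sr', hsrD, hsr0, hA⟩
    have hB1 : dot (q t0 - p sr0) (e1 sr0) = 0 := by rw [← hsr0]; exact (hA t0 ht0S).1
    have hB2 : 1 - κr sr0 * dot (q t0 - p sr0) (e2 sr0) > 0 := by
      rw [← hsr0]; exact (hA t0 ht0S).2
    refine ⟨hB1, hB2, fun u => θo u - θr (sr u), sr,
      fun u => dot (q u - p (sr u)) (e2 (sr u)), hsr0,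
      by show dot (q t0 - p (sr t0)) (e2 (sr t0)) = _; rw [hsr0],
      by show θo t0 - θr (sr t0) = _; rw [hsr0], ?_⟩
    by_cases hlt : t0 < t1
    · intro t ht
      have hd1 : dot (v t • (Real.cos (θo t), Real.sin (θo t))) (e1 (sr t))
          = v t * Real.cos (θo t - θr (sr t)) := by
        simp [dot, he1, Real.cos_sub]; ring
      have hd2 : dot (v t • (Real.cos (θo t), Real.sin (θo t))) (e2 (sr t))
          = v t * Real.sin (θo t - θr (sr t)) := by
        simp [dot, he2, Real.sin_sub]; ring
      have E1 := keyE1 hθr hκr he1 he2 hp (hq t ht) (hsrD t ht)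
      have E0 : HasDerivWithinAt (fun u => dot (q u - p (sr u)) (e1 (sr u))) 0
          (Set.Icc t0 t1) t :=
        (hasDerivWithinAt_const t _ (0 : ℝ)).congr (fun u hu => (hA u hu).1) ((hA t ht).1)
      have heq := (uniqueDiffOn_Icc hlt t ht).eq_deriv _ E1 E0
      rw [hd1] at heq
      have hDpos := (hA t ht).2
      have hDne : 1 - κr (sr t) * dot (q t - p (sr t)) (e2 (sr t)) ≠ 0 := ne_of_gt hDpos
      have hsr' : sr' t = v t * Real.cos (θo t - θr (sr t)) /
          (1 - κr (sr t) * dot (q t - p (sr t)) (e2 (sr t))) := by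
        rw [eq_div_iff hDne]; linarith [heq]
      refine ⟨?_, ?_, ?_, hDpos⟩
      · exact hsr' ▸ hsrD t ht
      · have E2 := keyE2 hθr hκr he1 he2 hp (hq t ht) (hsrD t ht)
        rw [hd2] at E2
        exact E2.congr_deriv (by rw [(hA t ht).1]; ring)
      · have hθd := (hθo t ht).sub
          ((θr_hasDerivAt hθr hκr (sr t)).comp_hasDerivWithinAt t (hsrD t ht))
        exact hθd.congr_deriv (by rw [hsr']; ring)
    · have h01 : t1 = t0 := le_antisymm (not_lt.1 hlt) ht01
      intro t ht
      rw [h01] at ht ⊢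
      have ht' : t = t0 := le_antisymm ht.2 ht.1
      subst ht'
      rw [Set.Icc_self]
      exact ⟨hasDerivWithinAt_singleton' _ _ _, hasDerivWithinAt_singleton' _ _ _,
        hasDerivWithinAt_singleton' _ _ _, (hA t ⟨le_rfl, h01.ge⟩).2⟩
  · rintro ⟨hB1, hB2, θ, sr, z, hsrt0, hzt0, hθt0, hODE⟩
    have hθeq : ∀ t ∈ Set.Icc t0 t1, θo t - θr (sr t) = θ t := by
      have hder : ∀ x ∈ Set.Icc t0 t1,
          HasDerivWithinAt (fun u => θo u - θr (sr u) - θ u) ((fun _ => (0:ℝ)) x)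
            (Set.Icc t0 t1) x := by
        intro x hx
        have h1 := ((hθo x hx).sub
          ((θr_hasDerivAt hθr hκr (sr x)).comp_hasDerivWithinAt x (hODE x hx).1)).sub
          (hODE x hx).2.2.1
        exact h1.congr_deriv (by ring)
      intro t ht
      have hle := Convex.norm_image_sub_le_of_norm_hasDerivWithin_le (C := 0) hder
        (fun x hx => by simp) (convex_Icc t0 t1) ht0S ht
      have h0 : θo t0 - θr (sr t0) - θ t0 = 0 := by rw [hsrt0, hθt0]; ring
      have : θo t - θr (sr t) - θ t - (θo t0 - θr (sr t0) - θ t0) = 0 :=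
        norm_le_zero_iff.mp (by simpa using hle)
      rw [h0] at this
      linarith [this]
    -- square function is constant zero
    have hsq0 : ∀ t ∈ Set.Icc t0 t1,
        dot (q t - p (sr t)) (e1 (sr t)) * dot (q t - p (sr t)) (e1 (sr t)) +
        (dot (q t - p (sr t)) (e2 (sr t)) - z t) * (dot (q t - p (sr t)) (e2 (sr t)) - z t)
          = 0 := by
      have hder : ∀ x ∈ Set.Icc t0 t1,
          HasDerivWithinAt (fun u =>
            dot (q u - p (sr u)) (e1 (sr u)) * dot (q u - p (sr u)) (e1 (sr u)) +
            (dot (q u - p (sr u)) (e2 (sr u)) - z u) *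
              (dot (q u - p (sr u)) (e2 (sr u)) - z u)) ((fun _ => (0:ℝ)) x)
            (Set.Icc t0 t1) x := by
        intro x hx
        obtain ⟨hsrd, hzd, hθd, hDpos⟩ := hODE x hx
        have E1 := keyE1 hθr hκr he1 he2 hp (hq x hx) hsrd
        have E2 := keyE2 hθr hκr he1 he2 hp (hq x hx) hsrd
        have hd1 : dot (v x • (Real.cos (θo x), Real.sin (θo x))) (e1 (sr x))
            = v x * Real.cos (θo x - θr (sr x)) := by
          simp [dot, he1, Real.cos_sub]; ring
        have hd2 : dot (v x • (Real.cos (θo x), Real.sin (θo x))) (e2 (sr x))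
            = v x * Real.sin (θo x - θr (sr x)) := by
          simp [dot, he2, Real.sin_sub]; ring
        rw [hd1] at E1
        rw [hd2] at E2
        have hB := E2.sub hzd
        have hsq := (E1.mul E1).add (hB.mul hB)
        have hsr'D : v x * Real.cos (θ x) / (1 - κr (sr x) * z x) * (1 - κr (sr x) * z x)
            = v x * Real.cos (θ x) := div_mul_cancel₀ _ (ne_of_gt hDpos)
        refine hsq.congr_deriv ?_
        rw [hθeq x hx]
        simp only [Pi.sub_apply]
        linear_combination (-2 * dot (q x - p (sr x)) (e1 (sr x))) * hsr'D
      intro t ht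
      have hle := Convex.norm_image_sub_le_of_norm_hasDerivWithin_le (C := 0) hder
        (fun x hx => by simp) (convex_Icc t0 t1) ht0S ht
      have hF0 : dot (q t0 - p (sr t0)) (e1 (sr t0)) = 0 := by rw [hsrt0]; exact hB1
      have hG0 : dot (q t0 - p (sr t0)) (e2 (sr t0)) - z t0 = 0 := by
        rw [hsrt0, hzt0]; ring
      have heq : dot (q t - p (sr t)) (e1 (sr t)) * dot (q t - p (sr t)) (e1 (sr t)) +
          (dot (q t - p (sr t)) (e2 (sr t)) - z t) *
            (dot (q t - p (sr t)) (e2 (sr t)) - z t)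
          - (dot (q t0 - p (sr t0)) (e1 (sr t0)) * dot (q t0 - p (sr t0)) (e1 (sr t0)) +
            (dot (q t0 - p (sr t0)) (e2 (sr t0)) - z t0) *
              (dot (q t0 - p (sr t0)) (e2 (sr t0)) - z t0)) = 0 :=
        norm_le_zero_iff.mp (by simpa using hle)
      rw [hF0, hG0] at heq
      linarith [heq]
    refine ⟨sr, fun t => v t * Real.cos (θ t) / (1 - κr (sr t) * z t),
      fun t ht => (hODE t ht).1, hsrt0, fun t ht => ?_⟩
    have h := hsq0 t ht
    have hF : dot (q t - p (sr t)) (e1 (sr t)) = 0 := by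
      have := mul_self_nonneg (dot (q t - p (sr t)) (e1 (sr t)))
      have := mul_self_nonneg (dot (q t - p (sr t)) (e2 (sr t)) - z t)
      nlinarith
    have hG : dot (q t - p (sr t)) (e2 (sr t)) = z t := by
      have := mul_self_nonneg (dot (q t - p (sr t)) (e1 (sr t)))
      have := mul_self_nonneg (dot (q t - p (sr t)) (e2 (sr t)) - z t)
      nlinarith
    exact ⟨hF, by rw [hG]; exact (hODE t ht).2.2.2⟩
end

section
/- (Third derivative of the tracking error, eq. (3.4).) Under the hypotheses of the previous statement, assume additionally that β, r, δ and k_r are differentiable with derivatives β̇, ṙ, δ̇ and k̇_r on [t₀,t₁], and write A = a₁₁β + (a₁₂/v) r + a₁₃ δ (so that A = κ v²) and D = 1 − k_r z. Then z is three times differentiable and z⃛ = (a₁₁ β̇ + (a₁₂/v) ṙ + a₁₃ δ̇) cos θ − (A²/v) sin θ + 3 k_r A v sin θ cos θ / D − k̇_r v² cos² θ / D − k_r k̇_r v² z cos² θ / D² − 3 k_r² v³ sin θ cos² θ / D² on [t₀,t₁]. -/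
/-- Third derivative of the tracking error, eq. (3.4):
with `A = a₁₁β + (a₁₂/v)r + a₁₃δ` and `D = 1 − k_r z`, under the error
dynamics the tracking error `z` is three times differentiable with
`z⃛ = (a₁₁β̇ + (a₁₂/v)ṙ + a₁₃δ̇) cos θ − (A²/v) sin θ
      + 3 k_r A v sin θ cos θ / D − k̇_r v² cos² θ / D
      − k_r k̇_r v² z cos² θ / D² − 3 k_r² v³ sin θ cos² θ / D²`. -/
theorem tracking_error_third_derivative
    (v a11 a12 a13 : ℝ) (hv : 0 < v)
    (t0 t1 : ℝ)
    (β r δ θ z kr κ β' r' δ' kr' : ℝ → ℝ)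
    (hβder : ∀ t ∈ Set.Icc t0 t1, HasDerivWithinAt β (β' t) (Set.Icc t0 t1) t)
    (hrder : ∀ t ∈ Set.Icc t0 t1, HasDerivWithinAt r (r' t) (Set.Icc t0 t1) t)
    (hδder : ∀ t ∈ Set.Icc t0 t1, HasDerivWithinAt δ (δ' t) (Set.Icc t0 t1) t)
    (hkrder : ∀ t ∈ Set.Icc t0 t1, HasDerivWithinAt kr (kr' t) (Set.Icc t0 t1) t)
    (hκ : ∀ t, κ t = a11 / v ^ 2 * β t + a12 / v ^ 3 * r t + a13 / v ^ 2 * δ t)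
    (hzder : ∀ t ∈ Set.Icc t0 t1,
      HasDerivWithinAt z (v * Real.sin (θ t)) (Set.Icc t0 t1) t)
    (hθder : ∀ t ∈ Set.Icc t0 t1,
      HasDerivWithinAt θ
        (κ t * v - kr t * v * Real.cos (θ t) / (1 - kr t * z t))
        (Set.Icc t0 t1) t)
    (hD : ∀ t ∈ Set.Icc t0 t1, 1 - kr t * z t > 0)
    (A D z2 : ℝ → ℝ)
    (hA : ∀ t, A t = a11 * β t + a12 / v * r t + a13 * δ t)
    (hDdef : ∀ t, D t = 1 - kr t * z t)
    (hz2 : ∀ t, z2 t =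
      Real.cos (θ t) * (A t - kr t * v ^ 2 * Real.cos (θ t) / D t)) :
    ∀ t ∈ Set.Icc t0 t1,
      HasDerivWithinAt (fun t => v * Real.sin (θ t)) (z2 t) (Set.Icc t0 t1) t ∧
      HasDerivWithinAt z2
        ((a11 * β' t + a12 / v * r' t + a13 * δ' t) * Real.cos (θ t) -
          A t ^ 2 / v * Real.sin (θ t) +
          3 * kr t * A t * v * Real.sin (θ t) * Real.cos (θ t) / D t -
          kr' t * v ^ 2 * Real.cos (θ t) ^ 2 / D t -
          kr t * kr' t * v ^ 2 * z t * Real.cos (θ t) ^ 2 / D t ^ 2 -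
          3 * kr t ^ 2 * v ^ 3 * Real.sin (θ t) * Real.cos (θ t) ^ 2 / D t ^ 2)
        (Set.Icc t0 t1) t := by
  intro t ht
  have hv0 : v ≠ 0 := ne_of_gt hv
  have hD0 : D t ≠ 0 := by rw [hDdef]; exact ne_of_gt (hD t ht)
  have hθ' := hθder t ht
  have hθval : κ t * v - kr t * v * Real.cos (θ t) / (1 - kr t * z t)
      = A t / v - kr t * v * Real.cos (θ t) / D t := by
    rw [hκ, hA, hDdef]; field_simp
  have hθ'2 : HasDerivWithinAt θ (A t / v - kr t * v * Real.cos (θ t) / D t)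
      (Set.Icc t0 t1) t := hθval ▸ hθ'
  have hcos : HasDerivWithinAt (fun s => Real.cos (θ s))
      (-Real.sin (θ t) * (A t / v - kr t * v * Real.cos (θ t) / D t))
      (Set.Icc t0 t1) t := hθ'2.cos
  have hA' : HasDerivWithinAt A (a11 * β' t + a12 / v * r' t + a13 * δ' t)
      (Set.Icc t0 t1) t := by
    have : HasDerivWithinAt (fun s => a11 * β s + a12 / v * r s + a13 * δ s)
        (a11 * β' t + a12 / v * r' t + a13 * δ' t) (Set.Icc t0 t1) t :=
      (((hβder t ht).const_mul a11).add ((hrder t ht).const_mul (a12 / v))).add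
        ((hδder t ht).const_mul a13)
    exact this.congr (fun s _ => hA s) (hA t)
  have hD' : HasDerivWithinAt D
      (0 - (kr' t * z t + kr t * (v * Real.sin (θ t)))) (Set.Icc t0 t1) t := by
    have : HasDerivWithinAt (fun s => 1 - kr s * z s)
        (0 - (kr' t * z t + kr t * (v * Real.sin (θ t)))) (Set.Icc t0 t1) t :=
      (hasDerivWithinAt_const t _ (1 : ℝ)).sub ((hkrder t ht).mul (hzder t ht))
    exact this.congr (fun s _ => hDdef s) (hDdef t)
  have hnum : HasDerivWithinAt (fun s => kr s * v ^ 2 * Real.cos (θ s))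
      (kr' t * v ^ 2 * Real.cos (θ t) + kr t * v ^ 2 *
        (-Real.sin (θ t) * (A t / v - kr t * v * Real.cos (θ t) / D t)))
      (Set.Icc t0 t1) t := ((hkrder t ht).mul_const (v ^ 2)).mul hcos
  have hdiv := hnum.div hD' hD0
  have hginner := hA'.sub hdiv
  have hg := hcos.mul hginner
  have hz2eq : z2 = fun s => Real.cos (θ s) *
      (A s - kr s * v ^ 2 * Real.cos (θ s) / D s) := funext hz2
  constructor
  · have h1 : HasDerivWithinAt (fun s => v * Real.sin (θ s))
        (v * (Real.cos (θ t) * (A t / v - kr t * v * Real.cos (θ t) / D t)))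
        (Set.Icc t0 t1) t := hθ'2.sin.const_mul v
    have : v * (Real.cos (θ t) * (A t / v - kr t * v * Real.cos (θ t) / D t))
        = z2 t := by rw [hz2]; field_simp
    exact this ▸ h1
  · rw [hz2eq]
    convert hg using 1
    · rfl
    · rfl
    · rfl
    simp only [Pi.sub_apply, Pi.div_apply]
    field_simp
    ring
end

section
/- (Feedback linearization of the tracking error without steering resistance.) Let v > 0, a₁₃ ≠ 0, and α₁, α₂, α₃ ∈ ℝ. Under the hypotheses of the third-derivative statement (error dynamics ż = v sin θ, θ̇ = κv − k_r v cos θ/(1 − k_r z) with κ = (a₁₁/v²)β + (a₁₂/v³)r + (a₁₃/v²)δ, D = 1 − k_r z > 0), assume additionally cos θ(t) ≠ 0 for all t and that the steering dynamics are δ̇ = u₀ where u₀ is defined pointwise by u₀ = (1/(a₁₃ cos θ)) · [ −α₁ z̈ − α₂ v sin θ − α₃ z − ( (a₁₁ β̇ + (a₁₂/v) ṙ) cos θ − (A²/v) sin θ + 3 k_r A v sin θ cos θ / D − k̇_r v² cos² θ / D − k_r k̇_r v² z cos² θ / D² − 3 k_r² v³ sin θ cos² θ / D² ) ], with A = a₁₁β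 + (a₁₂/v)r + a₁₃δ and z̈ = cos θ (A − k_r v² cos θ / D). Then z satisfies the linear differential equation z⃛ + α₁ z̈ + α₂ ż + α₃ z = 0 on [t₀,t₁]. -/
set_option maxHeartbeats 1000000 in
theorem aux_alg (v a13 α1 α2 α3 c s k k' zz B C : ℝ)
    (hv : v ≠ 0) (ha13 : a13 ≠ 0) (hc : c ≠ 0) (hE : 1 - k * zz ≠ 0) :
    -(α1 * (c * (B - k * v ^ 2 * c / (1 - k * zz))) + α2 * (v * s) + α3 * zz) =
      -s * (B / v ^ 2 * v - k * v * c / (1 - k * zz)) *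
          (B - k * v ^ 2 * c / (1 - k * zz)) +
        c * (C + a13 * (1 / (a13 * c) *
              (-α1 * (c * (B - k * v ^ 2 * c / (1 - k * zz))) - α2 * (v * s) - α3 * zz -
                (C * c - B ^ 2 / v * s + 3 * k * B * v * s * c / (1 - k * zz) -
                  k' * v ^ 2 * c ^ 2 / (1 - k * zz) -
                  k * k' * v ^ 2 * zz * c ^ 2 / (1 - k * zz) ^ 2 -
                  3 * k ^ 2 * v ^ 3 * s * c ^ 2 / (1 - k * zz) ^ 2))) -
            ((k' * v ^ 2 * c + k * v ^ 2 * (-s * (B / v ^ 2 * v - k * v * c / (1 - k * zz)))) *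
                (1 - k * zz) - k * v ^ 2 * c * (0 - (k' * zz + k * (v * s)))) /
              (1 - k * zz) ^ 2) := by
  field_simp
  ring

/-- Feedback linearization of the tracking error without
steering resistance: with steering dynamics `δ̇ = u₀` and `u₀` the
feedback-linearizing law of eq. (3.5), the tracking error satisfies the
linear differential equation `z⃛ + α₁ z̈ + α₂ ż + α₃ z = 0` on `[t₀,t₁]`. -/
theorem feedback_linearization_tracking_error
    (v a11 a12 a13 : ℝ) (hv : 0 < v) (ha13 : a13 ≠ 0)
    (α1 α2 α3 : ℝ)
    (t0 t1 : ℝ)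
    (β r δ θ z kr κ β' r' kr' : ℝ → ℝ)
    (hβder : ∀ t ∈ Set.Icc t0 t1, HasDerivWithinAt β (β' t) (Set.Icc t0 t1) t)
    (hrder : ∀ t ∈ Set.Icc t0 t1, HasDerivWithinAt r (r' t) (Set.Icc t0 t1) t)
    (hkrder : ∀ t ∈ Set.Icc t0 t1, HasDerivWithinAt kr (kr' t) (Set.Icc t0 t1) t)
    (hκ : ∀ t, κ t = a11 / v ^ 2 * β t + a12 / v ^ 3 * r t + a13 / v ^ 2 * δ t)
    (hzder : ∀ t ∈ Set.Icc t0 t1,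
      HasDerivWithinAt z (v * Real.sin (θ t)) (Set.Icc t0 t1) t)
    (hθder : ∀ t ∈ Set.Icc t0 t1,
      HasDerivWithinAt θ
        (κ t * v - kr t * v * Real.cos (θ t) / (1 - kr t * z t))
        (Set.Icc t0 t1) t)
    (hD : ∀ t ∈ Set.Icc t0 t1, 1 - kr t * z t > 0)
    (hcos : ∀ t ∈ Set.Icc t0 t1, Real.cos (θ t) ≠ 0)
    (A D z2 u0 : ℝ → ℝ)
    (hA : ∀ t, A t = a11 * β t + a12 / v * r t + a13 * δ t)
    (hDdef : ∀ t, D t = 1 - kr t * z t)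
    (hz2 : ∀ t, z2 t =
      Real.cos (θ t) * (A t - kr t * v ^ 2 * Real.cos (θ t) / D t))
    (hu0 : ∀ t, u0 t =
      1 / (a13 * Real.cos (θ t)) *
        (-α1 * z2 t - α2 * (v * Real.sin (θ t)) - α3 * z t -
          ((a11 * β' t + a12 / v * r' t) * Real.cos (θ t) -
            A t ^ 2 / v * Real.sin (θ t) +
            3 * kr t * A t * v * Real.sin (θ t) * Real.cos (θ t) / D t -
            kr' t * v ^ 2 * Real.cos (θ t) ^ 2 / D t -
            kr t * kr' t * v ^ 2 * z t * Real.cos (θ t) ^ 2 / D t ^ 2 -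
            3 * kr t ^ 2 * v ^ 3 * Real.sin (θ t) * Real.cos (θ t) ^ 2 / D t ^ 2)))
    (hδder : ∀ t ∈ Set.Icc t0 t1, HasDerivWithinAt δ (u0 t) (Set.Icc t0 t1) t) :
    ∃ z1 z2' z3 : ℝ → ℝ,
      (∀ t ∈ Set.Icc t0 t1, HasDerivWithinAt z (z1 t) (Set.Icc t0 t1) t) ∧
      (∀ t ∈ Set.Icc t0 t1, HasDerivWithinAt z1 (z2' t) (Set.Icc t0 t1) t) ∧
      (∀ t ∈ Set.Icc t0 t1, HasDerivWithinAt z2' (z3 t) (Set.Icc t0 t1) t) ∧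
      (∀ t ∈ Set.Icc t0 t1, z3 t + α1 * z2' t + α2 * z1 t + α3 * z t = 0) := by

  refine ⟨fun t => v * Real.sin (θ t), z2,
    fun t => -(α1 * z2 t + α2 * (v * Real.sin (θ t)) + α3 * z t), ?_, ?_, ?_, ?_⟩
  · exact hzder
  · intro t ht
    have hDne : (1 : ℝ) - kr t * z t ≠ 0 := ne_of_gt (hD t ht)
    have h1 : HasDerivWithinAt (fun t => v * Real.sin (θ t))
        (v * (Real.cos (θ t) * (κ t * v - kr t * v * Real.cos (θ t) / (1 - kr t * z t))))
        (Set.Icc t0 t1) t := ((hθder t ht).sin).const_mul v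
    convert h1 using 1
    rw [hz2, hA, hDdef, hκ]
    field_simp
  · intro t ht
    have hDne : (1 : ℝ) - kr t * z t ≠ 0 := ne_of_gt (hD t ht)
    have hDne' : D t ≠ 0 := by rw [hDdef]; exact hDne
    have hvne : v ≠ 0 := ne_of_gt hv
    have hcne : Real.cos (θ t) ≠ 0 := hcos t ht
    have hθ' := hθder t ht
    have hc : HasDerivWithinAt (fun t => Real.cos (θ t))
        (-Real.sin (θ t) * (κ t * v - kr t * v * Real.cos (θ t) / (1 - kr t * z t)))
        (Set.Icc t0 t1) t := hθ'.cos
    have hAd : HasDerivWithinAt (fun t => a11 * β t + a12 / v * r t + a13 * δ t)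
        (a11 * β' t + a12 / v * r' t + a13 * u0 t) (Set.Icc t0 t1) t :=
      (((hβder t ht).const_mul a11).add ((hrder t ht).const_mul (a12 / v))).add
        ((hδder t ht).const_mul a13)
    have hDd : HasDerivWithinAt (fun t => 1 - kr t * z t)
        (0 - (kr' t * z t + kr t * (v * Real.sin (θ t)))) (Set.Icc t0 t1) t :=
      (hasDerivWithinAt_const t _ (1:ℝ)).sub ((hkrder t ht).mul (hzder t ht))
    have hnum : HasDerivWithinAt (fun t => kr t * v ^ 2 * Real.cos (θ t))
        (kr' t * v ^ 2 * Real.cos (θ t) + kr t * v ^ 2 *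
          (-Real.sin (θ t) * (κ t * v - kr t * v * Real.cos (θ t) / (1 - kr t * z t))))
        (Set.Icc t0 t1) t := ((hkrder t ht).mul_const (v ^ 2)).mul hc
    have hq : HasDerivWithinAt
        (fun t => kr t * v ^ 2 * Real.cos (θ t) / (1 - kr t * z t))
        (((kr' t * v ^ 2 * Real.cos (θ t) + kr t * v ^ 2 *
          (-Real.sin (θ t) * (κ t * v - kr t * v * Real.cos (θ t) / (1 - kr t * z t)))) *
            (1 - kr t * z t) -
          kr t * v ^ 2 * Real.cos (θ t) *
            (0 - (kr' t * z t + kr t * (v * Real.sin (θ t))))) /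
          (1 - kr t * z t) ^ 2)
        (Set.Icc t0 t1) t := hnum.div hDd hDne
    have hf : HasDerivWithinAt
        (fun t => Real.cos (θ t) * ((a11 * β t + a12 / v * r t + a13 * δ t) -
          kr t * v ^ 2 * Real.cos (θ t) / (1 - kr t * z t)))
        (-Real.sin (θ t) * (κ t * v - kr t * v * Real.cos (θ t) / (1 - kr t * z t)) *
          ((a11 * β t + a12 / v * r t + a13 * δ t) -
            kr t * v ^ 2 * Real.cos (θ t) / (1 - kr t * z t)) +
         Real.cos (θ t) * ((a11 * β' t + a12 / v * r' t + a13 * u0 t) -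
          ((kr' t * v ^ 2 * Real.cos (θ t) + kr t * v ^ 2 *
            (-Real.sin (θ t) * (κ t * v - kr t * v * Real.cos (θ t) / (1 - kr t * z t)))) *
              (1 - kr t * z t) -
            kr t * v ^ 2 * Real.cos (θ t) *
              (0 - (kr' t * z t + kr t * (v * Real.sin (θ t))))) /
            (1 - kr t * z t) ^ 2))
        (Set.Icc t0 t1) t := hc.mul (hAd.sub hq)
    have hz2f : HasDerivWithinAt z2 _ (Set.Icc t0 t1) t :=
      hf.congr (fun x _ => by rw [hz2, hA, hDdef]) (by rw [hz2, hA, hDdef])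
    convert hz2f using 1
    beta_reduce
    rw [hu0, hz2, hA, hDdef, hκ]
    have hBv : a11 / v ^ 2 * β t + a12 / v ^ 3 * r t + a13 / v ^ 2 * δ t =
        (a11 * β t + a12 / v * r t + a13 * δ t) / v ^ 2 := by
      field_simp
    rw [hBv]
    exact aux_alg v a13 α1 α2 α3 (Real.cos (θ t)) (Real.sin (θ t)) (kr t) (kr' t)
      (z t) (a11 * β t + a12 / v * r t + a13 * δ t) (a11 * β' t + a12 / v * r' t)
      hvne ha13 hcne hDne
  · intro t ht
    ring
end

section
/- (Path-following criterion is achieved in closed loop.) Let v > 0, a₁₃ ≠ 0, and α₁, α₂, α₃ ∈ ℝ be such that every complex root of X³ + α₁X² + α₂X + α₃ has strictly negative real part. Suppose that on [t₀,∞) the hypotheses of the feedback-linearization statement hold (error dynamics ż = v sin θ, θ̇ = κv − k_r v cos θ/(1 − k_r z) with κ = (a₁₁/v²)β + (a₁₂/v³)r + (a₁₃/v²)δ, 1 − k_r z > 0, cos θ ≠ 0, and δ̇ = u₀ with u₀ the feedback-linearizing control law). Then the signed tracking error satisfies lim_{t→∞} z(t) = 0. -/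
open Filter Set intervalIntegral in
lemma lemA (t0 : ℝ) (lam : ℂ) (hlam : lam.re < 0)
    (f g : ℝ → ℂ)
    (hg : ContinuousOn g (Set.Ici t0))
    (hgl : Filter.Tendsto g Filter.atTop (nhds 0))
    (hf : ∀ t ∈ Set.Ici t0, HasDerivWithinAt f (lam * f t + g t) (Set.Ici t0) t) :
    Filter.Tendsto f Filter.atTop (nhds 0) := by
  set μ : ℝ := -lam.re with hμdef
  have hμ : 0 < μ := by simp [hμdef]; linarith
  set h : ℝ → ℂ := fun t => Complex.exp (-lam * t) * f t with hh_def
  set H : ℝ → ℂ := fun t => Complex.exp (-lam * t) * g t with hH_def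
  have hexp : ∀ t : ℝ, HasDerivAt (fun t : ℝ => Complex.exp (-lam * t))
      (Complex.exp (-lam * t) * (-lam)) t := by
    intro t
    have h1 : HasDerivAt (fun t : ℝ => (t : ℂ)) 1 t := by
      simpa using (hasDerivAt_id t).ofReal_comp
    exact (h1.const_mul (-lam)).cexp.congr_deriv (by ring)
  have hh : ∀ t ∈ Set.Ici t0, HasDerivWithinAt h (H t) (Set.Ici t0) t := by
    intro t ht
    have := ((hexp t).hasDerivWithinAt.mul (hf t ht))
    refine this.congr_deriv (Eq.symm ?_)
    simp only [hH_def]; ring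
  have hcont : ContinuousOn h (Set.Ici t0) := fun x hx => (hh x hx).continuousWithinAt
  have hHcont : ContinuousOn H (Set.Ici t0) :=
    (Complex.continuous_exp.comp (continuous_const.mul Complex.continuous_ofReal)).continuousOn.mul hg
  have hftc : ∀ a ∈ Set.Ici t0, ∀ t, a ≤ t → h t = h a + ∫ s in a..t, H s := by
    intro a ha t hat
    have : ∫ s in a..t, H s = h t - h a := by
      apply intervalIntegral.integral_eq_sub_of_hasDeriv_right_of_le hat
        (hcont.mono (Set.Icc_subset_Ici_self.trans (Set.Ici_subset_Ici.2 ha)))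
      · intro x hx
        exact (hh x (le_trans ha hx.1.le)).mono (Set.Ioi_subset_Ici (le_trans ha hx.1.le))
      · apply (hHcont.mono ?_).intervalIntegrable
        rw [Set.uIcc_of_le hat]
        exact Set.Icc_subset_Ici_self.trans (Set.Ici_subset_Ici.2 ha)
    rw [this]; ring
  have hexpint : ∀ a t : ℝ, ∫ s in a..t, Real.exp (μ * s)
      = Real.exp (μ * t) / μ - Real.exp (μ * a) / μ := by
    intro a t
    apply intervalIntegral.integral_eq_sub_of_hasDerivAt
    · intro x hx
      have : HasDerivAt (fun s : ℝ => Real.exp (μ * s) / μ)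
          (Real.exp (μ*x)*(μ*1)/μ) x :=
        (((hasDerivAt_id x).const_mul μ).exp.div_const μ)
      simpa [hμ.ne', mul_comm] using this
    · exact (Real.continuous_exp.comp (continuous_const.mul continuous_id)).continuousOn.intervalIntegrable
  rw [Metric.tendsto_atTop]
  intro ε hε
  set ε1 : ℝ := ε * μ / 4 with hε1def
  have hε1 : 0 < ε1 := by positivity
  obtain ⟨N0, hN0⟩ := Metric.tendsto_atTop.1 hgl ε1 hε1
  set a : ℝ := max N0 t0 with hadef
  have ha : a ∈ Set.Ici t0 := Set.mem_Ici.2 (le_max_right _ _)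
  -- key bound, for t ≥ a
  have key : ∀ t, a ≤ t → ‖f t‖ ≤ Real.exp (lam.re * t) * ‖h a‖ + ε / 4 := by
    intro t hat
    have hft : f t = Complex.exp (lam * t) * h t := by
      simp only [hh_def]
      rw [← mul_assoc, ← Complex.exp_add]
      ring_nf
      rw [Complex.exp_zero]
      ring
    have hne : ‖Complex.exp (lam * (t:ℂ))‖ = Real.exp (lam.re * t) := by
      rw [Complex.norm_exp]
      simp [Complex.mul_re]
    have hint1 : ‖∫ s in a..t, H s‖ ≤ ∫ s in a..t, ‖H s‖ :=
      intervalIntegral.norm_integral_le_integral_norm hat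
    have hint2 : (∫ s in a..t, ‖H s‖) ≤ ∫ s in a..t, ε1 * Real.exp (μ * s) := by
      apply intervalIntegral.integral_mono_on hat
      · apply ((hHcont.mono ?_).norm).intervalIntegrable
        rw [Set.uIcc_of_le hat]
        exact Set.Icc_subset_Ici_self.trans (Set.Ici_subset_Ici.2 ha)
      · exact (continuous_const.mul (Real.continuous_exp.comp (continuous_const.mul continuous_id))).continuousOn.intervalIntegrable
      · intro s hs
        have hsa : N0 ≤ s := le_trans (le_max_left _ _) hs.1
        have hgs : ‖g s‖ ≤ ε1 := by
          have := hN0 s hsa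
          rw [dist_zero_right] at this
          linarith
        have : ‖H s‖ = Real.exp (μ * s) * ‖g s‖ := by
          rw [hH_def]
          simp only [norm_mul]
          rw [Complex.norm_exp]
          congr 1
          simp [Complex.mul_re, hμdef]
        rw [this]
        have hexppos : (0:ℝ) < Real.exp (μ * s) := Real.exp_pos _
        nlinarith
    have hint3 : (∫ s in a..t, ε1 * Real.exp (μ * s)) ≤ ε1 * Real.exp (μ * t) / μ := by
      rw [intervalIntegral.integral_const_mul, hexpint a t]
      have : 0 < Real.exp (μ * a) := Real.exp_pos _
      rw [mul_sub]
      have h2 : 0 < ε1 * (Real.exp (μ * a) / μ) := by positivity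
      rw [mul_div_assoc]
      linarith
    have hht : ‖h t‖ ≤ ‖h a‖ + ε1 * Real.exp (μ * t) / μ := by
      rw [hftc a ha t hat]
      calc ‖h a + ∫ s in a..t, H s‖ ≤ ‖h a‖ + ‖∫ s in a..t, H s‖ := norm_add_le _ _
      _ ≤ ‖h a‖ + ε1 * Real.exp (μ * t) / μ := by linarith
    have hfle : ‖f t‖ ≤ Real.exp (lam.re * t) * (‖h a‖ + ε1 * Real.exp (μ * t) / μ) := by
      rw [hft, norm_mul, hne]
      have : 0 < Real.exp (lam.re * t) := Real.exp_pos _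
      nlinarith
    have hcollapse : Real.exp (lam.re * t) * (ε1 * Real.exp (μ * t) / μ) = ε / 4 := by
      rw [hε1def]
      have : Real.exp (lam.re * t) * Real.exp (μ * t) = 1 := by
        rw [← Real.exp_add]
        simp [hμdef]
      have h1 : Real.exp (lam.re * t) * (ε * μ / 4 * Real.exp (μ * t) / μ)
          = ε * μ / 4 * (Real.exp (lam.re * t) * Real.exp (μ * t)) / μ := by ring
      rw [h1, this]
      field_simp
    nlinarith [hfle, hcollapse, Real.exp_pos (lam.re * t)]
  -- tail estimate
  have h1 : Filter.Tendsto (fun t : ℝ => μ * t) Filter.atTop Filter.atTop :=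
    tendsto_id.const_mul_atTop hμ
  have h2 : Filter.Tendsto (fun t : ℝ => lam.re * t) Filter.atTop Filter.atBot := by
    have heq : (fun t : ℝ => lam.re * t) = (fun x : ℝ => -x) ∘ (fun t : ℝ => μ * t) := by
      funext t; simp [hμdef]
    rw [heq]
    exact tendsto_neg_atTop_atBot.comp h1
  have h3 : Filter.Tendsto (fun t : ℝ => Real.exp (lam.re * t) * ‖h a‖)
      Filter.atTop (nhds 0) := by
    have := (Real.tendsto_exp_atBot.comp h2).mul_const ‖h a‖
    simpa using this
  have h4 : ∀ᶠ t : ℝ in Filter.atTop, Real.exp (lam.re * t) * ‖h a‖ < ε / 2 :=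
    h3.eventually_lt_const (by linarith)
  obtain ⟨N, hN⟩ := (h4.and (Filter.eventually_ge_atTop a)).exists_forall_of_atTop
  refine ⟨N, fun t ht => ?_⟩
  obtain ⟨hNlt, hNa⟩ := hN t ht
  rw [dist_zero_right]
  have := key t hNa
  linarith

open Polynomial in
lemma cubic_factor (α1 α2 α3 : ℝ)
    (hroots : ∀ x : ℂ,
      x ^ 3 + (α1 : ℂ) * x ^ 2 + (α2 : ℂ) * x + (α3 : ℂ) = 0 → x.re < 0) :
    ∃ l1 l2 l3 : ℂ, l1.re < 0 ∧ l2.re < 0 ∧ l3.re < 0 ∧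
      (α1 : ℂ) = -(l1 + l2 + l3) ∧ (α2 : ℂ) = l1*l2 + l1*l3 + l2*l3 ∧
      (α3 : ℂ) = -(l1*l2*l3) := by
  obtain ⟨l1, hl1⟩ := Complex.exists_root (f := C 1 * X ^ 3 + C (α1:ℂ) * X ^ 2 + C (α2:ℂ) * X + C (α3:ℂ))
    (by rw [Polynomial.degree_cubic one_ne_zero]; norm_num)
  have hroot1 : l1 ^ 3 + (α1:ℂ) * l1 ^ 2 + (α2:ℂ) * l1 + (α3:ℂ) = 0 := by
    have := hl1
    simp [Polynomial.IsRoot, Polynomial.eval_add, Polynomial.eval_mul] at this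
    linear_combination this
  obtain ⟨l2, hl2⟩ := Complex.exists_root
    (f := C 1 * X ^ 2 + C ((α1:ℂ) + l1) * X + C ((α2:ℂ) + l1 * ((α1:ℂ) + l1)))
    (by rw [Polynomial.degree_quadratic one_ne_zero]; norm_num)
  have hroot2 : l2 ^ 2 + ((α1:ℂ) + l1) * l2 + ((α2:ℂ) + l1 * ((α1:ℂ) + l1)) = 0 := by
    have := hl2
    simp [Polynomial.IsRoot, Polynomial.eval_add, Polynomial.eval_mul] at this
    linear_combination this
  set l3 : ℂ := -((α1:ℂ) + l1) - l2 with hl3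
  have hq : ∀ x : ℂ, x ^ 2 + ((α1:ℂ) + l1) * x + ((α2:ℂ) + l1 * ((α1:ℂ) + l1)) = 0 →
      x ^ 3 + (α1:ℂ) * x ^ 2 + (α2:ℂ) * x + (α3:ℂ) = 0 := by
    intro x hx
    linear_combination (x - l1) * hx + hroot1
  have hroot3 : l3 ^ 2 + ((α1:ℂ) + l1) * l3 + ((α2:ℂ) + l1 * ((α1:ℂ) + l1)) = 0 := by
    rw [hl3]; linear_combination hroot2
  refine ⟨l1, l2, l3, hroots l1 hroot1, hroots l2 (hq l2 hroot2), hroots l3 (hq l3 hroot3),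
    ?_, ?_, ?_⟩
  · rw [hl3]; ring
  · rw [hl3]; linear_combination hroot2
  · rw [hl3]; linear_combination hroot1 - l1 * hroot2



set_option maxHeartbeats 2000000 in
/-- Path-following criterion is achieved in closed loop: under
the hypotheses of the feedback-linearization statement on `[t₀,∞)` and with
Hurwitz coefficients `α₁, α₂, α₃`, the signed tracking error satisfies
`lim_{t→∞} z(t) = 0`. -/
theorem closed_loop_path_following
    (v a11 a12 a13 : ℝ) (hv : 0 < v) (ha13 : a13 ≠ 0)
    (α1 α2 α3 : ℝ)
    (hroots : ∀ x : ℂ,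
      x ^ 3 + (α1 : ℂ) * x ^ 2 + (α2 : ℂ) * x + (α3 : ℂ) = 0 → x.re < 0)
    (t0 : ℝ)
    (β r δ θ z kr κ β' r' kr' : ℝ → ℝ)
    (hβder : ∀ t ∈ Set.Ici t0, HasDerivWithinAt β (β' t) (Set.Ici t0) t)
    (hrder : ∀ t ∈ Set.Ici t0, HasDerivWithinAt r (r' t) (Set.Ici t0) t)
    (hkrder : ∀ t ∈ Set.Ici t0, HasDerivWithinAt kr (kr' t) (Set.Ici t0) t)
    (hκ : ∀ t, κ t = a11 / v ^ 2 * β t + a12 / v ^ 3 * r t + a13 / v ^ 2 * δ t)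
    (hzder : ∀ t ∈ Set.Ici t0,
      HasDerivWithinAt z (v * Real.sin (θ t)) (Set.Ici t0) t)
    (hθder : ∀ t ∈ Set.Ici t0,
      HasDerivWithinAt θ
        (κ t * v - kr t * v * Real.cos (θ t) / (1 - kr t * z t))
        (Set.Ici t0) t)
    (hD : ∀ t ∈ Set.Ici t0, 1 - kr t * z t > 0)
    (hcos : ∀ t ∈ Set.Ici t0, Real.cos (θ t) ≠ 0)
    (A D z2 u0 : ℝ → ℝ)
    (hA : ∀ t, A t = a11 * β t + a12 / v * r t + a13 * δ t)
    (hDdef : ∀ t, D t = 1 - kr t * z t)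
    (hz2 : ∀ t, z2 t =
      Real.cos (θ t) * (A t - kr t * v ^ 2 * Real.cos (θ t) / D t))
    (hu0 : ∀ t, u0 t =
      1 / (a13 * Real.cos (θ t)) *
        (-α1 * z2 t - α2 * (v * Real.sin (θ t)) - α3 * z t -
          ((a11 * β' t + a12 / v * r' t) * Real.cos (θ t) -
            A t ^ 2 / v * Real.sin (θ t) +
            3 * kr t * A t * v * Real.sin (θ t) * Real.cos (θ t) / D t -
            kr' t * v ^ 2 * Real.cos (θ t) ^ 2 / D t -
            kr t * kr' t * v ^ 2 * z t * Real.cos (θ t) ^ 2 / D t ^ 2 -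
            3 * kr t ^ 2 * v ^ 3 * Real.sin (θ t) * Real.cos (θ t) ^ 2 / D t ^ 2)))
    (hδder : ∀ t ∈ Set.Ici t0, HasDerivWithinAt δ (u0 t) (Set.Ici t0) t) :
    Filter.Tendsto z Filter.atTop (nhds 0) := by
  -- real second and third derivative facts
  have hstep1 : ∀ t ∈ Set.Ici t0,
      HasDerivWithinAt (fun t => v * Real.sin (θ t)) (z2 t) (Set.Ici t0) t := by
    intro t ht
    have h1 := ((Real.hasDerivAt_sin (θ t)).comp_hasDerivWithinAt t (hθder t ht)).const_mul v
    refine h1.congr_deriv (Eq.symm ?_)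
    have hD0 : (1 : ℝ) - kr t * z t ≠ 0 := (hD t ht).ne'
    have hvne : v ≠ 0 := hv.ne'
    rw [hz2, hκ, hA, hDdef]
    field_simp
  have hstep2 : ∀ t ∈ Set.Ici t0, HasDerivWithinAt z2
      (-α1 * z2 t - α2 * (v * Real.sin (θ t)) - α3 * z t) (Set.Ici t0) t := by
    intro t ht
    have hD0 : (1 : ℝ) - kr t * z t ≠ 0 := (hD t ht).ne'
    have hDne : D t ≠ 0 := by rw [hDdef]; exact hD0
    have hvne : v ≠ 0 := hv.ne'
    have hAder : HasDerivWithinAt A (a11 * β' t + a12 / v * r' t + a13 * u0 t) (Set.Ici t0) t := by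
      rw [funext hA]
      exact (((hβder t ht).const_mul a11).add ((hrder t ht).const_mul (a12 / v))).add
        ((hδder t ht).const_mul a13)
    have hDder : HasDerivWithinAt D (-(kr' t * z t + kr t * (v * Real.sin (θ t)))) (Set.Ici t0) t := by
      rw [funext hDdef]
      have h2 := (hasDerivWithinAt_const t (Set.Ici t0) (1 : ℝ)).sub
        ((hkrder t ht).mul (hzder t ht))
      refine h2.congr_deriv (Eq.symm ?_)
      ring
    have hct : HasDerivWithinAt (fun s => Real.cos (θ s))
        (-Real.sin (θ t) * (κ t * v - kr t * v * Real.cos (θ t) / (1 - kr t * z t)))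
        (Set.Ici t0) t :=
      (Real.hasDerivAt_cos (θ t)).comp_hasDerivWithinAt t (hθder t ht)
    have hfrac : HasDerivWithinAt (fun s => kr s * v ^ 2 * Real.cos (θ s) / D s)
        (((kr' t * v ^ 2 * Real.cos (θ t) + kr t * v ^ 2 *
          (-Real.sin (θ t) * (κ t * v - kr t * v * Real.cos (θ t) / (1 - kr t * z t)))) * D t -
          kr t * v ^ 2 * Real.cos (θ t) * -(kr' t * z t + kr t * (v * Real.sin (θ t)))) / D t ^ 2)
        (Set.Ici t0) t :=
      (((hkrder t ht).mul_const (v ^ 2)).mul hct).div hDder hDne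
    have hmain := hct.mul (hAder.sub hfrac)
    have hmain2 := hmain.congr (fun s _ => hz2 s) (hz2 t)
    refine hmain2.congr_deriv (Eq.symm ?_)
    have hc := hcos t ht
    simp only [hu0, hz2, hκ, hA, hDdef, Pi.sub_apply]
    field_simp
    ring
  -- complexification
  have ofReal_der : ∀ (F : ℝ → ℝ) (F' : ℝ) (t : ℝ), HasDerivWithinAt F F' (Set.Ici t0) t →
      HasDerivWithinAt (fun s => ((F s : ℂ))) ((F' : ℂ)) (Set.Ici t0) t := by
    intro F F' t hF
    exact hF.ofReal_comp
  obtain ⟨l1, l2, l3, h1neg, h2neg, h3neg, e1, e2, e3⟩ := cubic_factor α1 α2 α3 hroots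
  set Z : ℝ → ℂ := fun t => ((z t : ℝ) : ℂ) with hZdef
  set P : ℝ → ℂ := fun t => ((v * Real.sin (θ t) : ℝ) : ℂ) with hPdef
  set Q : ℝ → ℂ := fun t => ((z2 t : ℝ) : ℂ) with hQdef
  have hZd : ∀ t ∈ Set.Ici t0, HasDerivWithinAt Z (P t) (Set.Ici t0) t :=
    fun t ht => ofReal_der _ _ t (hzder t ht)
  have hPd : ∀ t ∈ Set.Ici t0, HasDerivWithinAt P (Q t) (Set.Ici t0) t :=
    fun t ht => ofReal_der _ _ t (hstep1 t ht)
  have hQd : ∀ t ∈ Set.Ici t0, HasDerivWithinAt Q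
      (-(α1 : ℂ) * Q t - (α2 : ℂ) * P t - (α3 : ℂ) * Z t) (Set.Ici t0) t := by
    intro t ht
    have h := ofReal_der _ _ t (hstep2 t ht)
    convert h using 1
    simp only [hZdef, hPdef, hQdef]
    push_cast
    ring
  set y3 : ℝ → ℂ := fun t => Q t - (l2 + l3) * P t + l2 * l3 * Z t with hy3def
  set y2 : ℝ → ℂ := fun t => P t - l3 * Z t with hy2def
  have hy3d : ∀ t ∈ Set.Ici t0,
      HasDerivWithinAt y3 (l1 * y3 t + (fun _ : ℝ => (0 : ℂ)) t) (Set.Ici t0) t := by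
    intro t ht
    have h := ((hQd t ht).sub ((hPd t ht).const_mul (l2 + l3))).add
      ((hZd t ht).const_mul (l2 * l3))
    refine h.congr_deriv (Eq.symm ?_)
    simp only [hy3def]
    linear_combination (Q t) * e1 + (P t) * e2 + (Z t) * e3
  have hy3cont : ContinuousOn y3 (Set.Ici t0) := fun t ht => (hy3d t ht).continuousWithinAt
  have hy3lim : Filter.Tendsto y3 Filter.atTop (nhds 0) :=
    lemA t0 l1 h1neg y3 (fun _ => 0) continuousOn_const tendsto_const_nhds hy3d
  have hy2d : ∀ t ∈ Set.Ici t0,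
      HasDerivWithinAt y2 (l2 * y2 t + y3 t) (Set.Ici t0) t := by
    intro t ht
    have h := (hPd t ht).sub ((hZd t ht).const_mul l3)
    refine h.congr_deriv (Eq.symm ?_)
    simp only [hy2def, hy3def]
    ring
  have hy2cont : ContinuousOn y2 (Set.Ici t0) := fun t ht => (hy2d t ht).continuousWithinAt
  have hy2lim : Filter.Tendsto y2 Filter.atTop (nhds 0) :=
    lemA t0 l2 h2neg y2 y3 hy3cont hy3lim hy2d
  have hZd2 : ∀ t ∈ Set.Ici t0,
      HasDerivWithinAt Z (l3 * Z t + y2 t) (Set.Ici t0) t := by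
    intro t ht
    convert hZd t ht using 1
    simp only [hy2def]
    ring
  have hZlim : Filter.Tendsto Z Filter.atTop (nhds 0) :=
    lemA t0 l3 h3neg Z y2 hy2cont hy2lim hZd2
  have hre : Filter.Tendsto (fun t => (Z t).re) Filter.atTop (nhds (0 : ℂ).re) :=
    (Complex.continuous_re.tendsto 0).comp hZlim
  simpa [hZdef] using hre
end
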